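/- Fix an integer N > 1. An N-element subset A = {a₁ < … < a_N} ⊆ ℤ is the leading term of a KdV subset if and only if ∑_{i=1}^{N} a_i = N(N−1)/2 and a_i − a_j is not divisible by N for all i ≠ j. -/

import Mathlib

/-- A subset `S ⊆ ℤ` is of virtual cardinal zero if both `S \ ℤ≥0` and `ℤ≥0 \ S`
are finite and have the same cardinality. -/
def VirtualCardZero (S : Set ℤ) : Prop :=
  (S \ {n : ℤ | 0 ≤ n}).Finite ∧ ({n : ℤ | 0 ≤ n} \ S).Finite ∧
    (S \ {n : ℤ | 0 ≤ n}).ncard = ({n : ℤ | 0 ≤ n} \ S).ncard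

/-- The shift `S + k = {s + k : s ∈ S}` of a set of integers. -/
def shiftSet (S : Set ℤ) (k : ℤ) : Set ℤ := (fun s => s + k) '' S

/-- A KdV subset (for a fixed `N`): a subset `S ⊆ ℤ` of virtual cardinal zero
such that `S + N ⊆ S`. -/
def IsKdV (N : ℕ) (S : Set ℤ) : Prop :=
  VirtualCardZero S ∧ shiftSet S N ⊆ S

/-- `A` is the leading term of the KdV subset `S`: `A` is an `N`-element set with
`S = A ∪ (S+N)` and `A ∩ (S+N) = ∅`. -/
def IsLeadingTerm (N : ℕ) (S : Set ℤ) (A : Finset ℤ) : Prop :=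
  A.card = N ∧ (↑A : Set ℤ) ∪ shiftSet S N = S ∧ (↑A : Set ℤ) ∩ shiftSet S N = ∅

/-- The mutation `S[a] = {a+1−N} ∪ (S+1)` of a KdV subset `S` at an element `a`
of its leading term. -/
def mutate (N : ℕ) (S : Set ℤ) (a : ℤ) : Set ℤ :=
  {a + 1 - (N : ℤ)} ∪ shiftSet S 1

namespace KdVAux

/-- The "ray" `{a, a+N, a+2N, ...}`. -/
def ray (N : ℕ) (a : ℤ) : Set ℤ := {x | ∃ k : ℕ, x = a + (N : ℤ) * k}

/-- The canonical KdV set with leading term `A`. -/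
def SA (N : ℕ) (A : Finset ℤ) : Set ℤ := ⋃ a ∈ A, ray N a

lemma mem_ray_iff {N : ℕ} (hN : 0 < N) (a x : ℤ) :
    x ∈ ray N a ↔ a ≤ x ∧ x % N = a % N := by
  constructor
  · rintro ⟨k, rfl⟩
    have hk : (0:ℤ) ≤ (N:ℤ) * k := by positivity
    refine ⟨by omega, ?_⟩
    rw [Int.add_mul_emod_self_left]
  · rintro ⟨hle, hmod⟩
    have hdvd : (N:ℤ) ∣ x - a := Int.ModEq.dvd hmod.symm
    obtain ⟨m, hm⟩ := hdvd
    have hNpos : (0:ℤ) < N := by exact_mod_cast hN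
    have hm0 : 0 ≤ m := by nlinarith
    exact ⟨m.toNat, by rw [Int.toNat_of_nonneg hm0]; omega⟩

section Main

variable {N : ℕ} (hN : 0 < N) {A : Finset ℤ}
  (hres : ∀ a ∈ A, ∀ b ∈ A, a ≠ b → ¬ (N : ℤ) ∣ (a - b))

include hres in
lemma res_inj : ∀ a ∈ A, ∀ b ∈ A, a % N = b % N → a = b := by
  intro a ha b hb h
  by_contra hne
  have hd : (N:ℤ) ∣ b - a := Int.ModEq.dvd h
  exact hres a ha b hb hne (by simpa [neg_sub] using hd.neg_right)

include hN hres in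
lemma res_image (hcard : A.card = N) :
    A.image (fun a => (a % (N:ℤ)).toNat) = Finset.range N := by
  have hNpos : (0:ℤ) < N := by exact_mod_cast hN
  have hsub : A.image (fun a => (a % (N:ℤ)).toNat) ⊆ Finset.range N := by
    intro n hn
    simp only [Finset.mem_image] at hn
    obtain ⟨a, _, rfl⟩ := hn
    have h1 := Int.emod_nonneg a (by positivity : (N:ℤ) ≠ 0)
    have h2 := Int.emod_lt_of_pos a hNpos
    simp only [Finset.mem_range]; omega
  have hinj : Set.InjOn (fun a => (a % (N:ℤ)).toNat) A := by
    intro a ha b hb h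
    have h' : (a % (N:ℤ)).toNat = (b % (N:ℤ)).toNat := h
    have h1 := Int.emod_nonneg a (by positivity : (N:ℤ) ≠ 0)
    have h1' := Int.emod_nonneg b (by positivity : (N:ℤ) ≠ 0)
    exact res_inj hres a ha b hb (by omega)
  have hc : (A.image (fun a => (a % (N:ℤ)).toNat)).card = N := by
    rw [Finset.card_image_of_injOn hinj, hcard]
  exact Finset.eq_of_subset_of_card_le hsub (by rw [hc, Finset.card_range])

include hN hres in
lemma res_sum (hcard : A.card = N) :
    ∑ a ∈ A, a % N = (N : ℤ) * ((N : ℤ) - 1) / 2 := by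
  have hNpos : (0:ℤ) < N := by exact_mod_cast hN
  have h1 : ∑ a ∈ A, a % N = ∑ a ∈ A, (((a % (N:ℤ)).toNat : ℤ)) := by
    refine Finset.sum_congr rfl fun a _ => ?_
    rw [Int.toNat_of_nonneg (Int.emod_nonneg a (by positivity))]
  have hinj : Set.InjOn (fun a => (a % (N:ℤ)).toNat) A := by
    intro a ha b hb h
    have h' : (a % (N:ℤ)).toNat = (b % (N:ℤ)).toNat := h
    have h1 := Int.emod_nonneg a (by positivity : (N:ℤ) ≠ 0)
    have h1' := Int.emod_nonneg b (by positivity : (N:ℤ) ≠ 0)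
    exact res_inj hres a ha b hb (by omega)
  have h2 : ∑ a ∈ A, (((a % (N:ℤ)).toNat : ℤ)) = ∑ n ∈ Finset.range N, (n : ℤ) := by
    rw [← res_image hN hres hcard, Finset.sum_image hinj]
  have h3 : (∑ n ∈ Finset.range N, (n : ℤ)) * 2 = (N : ℤ) * ((N : ℤ) - 1) := by
    have h := Finset.sum_range_id_mul_two N
    zify [hN] at h
    convert h using 2
  rw [h1, h2, ← h3]
  omega

include hN hres in
lemma sum_iff (hcard : A.card = N) :
    (∑ a ∈ A, a = (N : ℤ) * ((N : ℤ) - 1) / 2) ↔ (∑ a ∈ A, a / N = 0) := by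
  have hNpos : (0:ℤ) < N := by exact_mod_cast hN
  have h1 : ∑ a ∈ A, a = (N:ℤ) * (∑ a ∈ A, a / N) + ∑ a ∈ A, a % N := by
    rw [Finset.mul_sum, ← Finset.sum_add_distrib]
    exact (Finset.sum_congr rfl fun a _ => (Int.mul_ediv_add_emod a N).symm)
  rw [res_sum hN hres hcard] at h1
  constructor
  · intro h
    have : (N:ℤ) * (∑ a ∈ A, a / N) = 0 := by omega
    exact (mul_eq_zero.mp this).resolve_left (by positivity)
  · intro h; rw [h] at h1; omega

/-- Finset of negative elements of `ray N a`. -/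
def negF (N : ℕ) (a : ℤ) : Finset ℤ :=
  (Finset.range (-(a / N)).toNat).image (fun k : ℕ => a + (N:ℤ) * k)

/-- Finset of "missing" nonnegative elements below `a` in its residue class. -/
def posF (N : ℕ) (a : ℤ) : Finset ℤ :=
  (Finset.range ((a / N)).toNat).image (fun j : ℕ => a % N + (N:ℤ) * j)

include hN in
lemma lt_zero_iff (a : ℤ) (k : ℕ) : a + (N:ℤ) * k < 0 ↔ (k : ℤ) < -(a / N) := by
  have hNpos : (0:ℤ) < N := by exact_mod_cast hN
  have h := Int.mul_ediv_add_emod a N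
  have h1 := Int.emod_nonneg a (by positivity : (N:ℤ) ≠ 0)
  have h2 := Int.emod_lt_of_pos a hNpos
  set q := a / N with hq
  set r := a % N with hr
  have hk : (0:ℤ) ≤ (k:ℤ) := by positivity
  constructor
  · intro hlt
    by_contra hc
    push_neg at hc
    nlinarith
  · intro hlt
    nlinarith

include hN in
lemma mem_negF (a x : ℤ) : x ∈ negF N a ↔ x ∈ ray N a ∧ x < 0 := by
  simp only [negF, Finset.mem_image, Finset.mem_range, ray, Set.mem_setOf_eq]
  constructor
  · rintro ⟨k, hk, rfl⟩
    have : (k:ℤ) < -(a / N) := by omega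
    exact ⟨⟨k, rfl⟩, (lt_zero_iff hN a k).mpr this⟩
  · rintro ⟨⟨k, rfl⟩, hlt⟩
    have := (lt_zero_iff hN a k).mp hlt
    exact ⟨k, by omega, rfl⟩

include hN in
lemma negF_mod (a x : ℤ) (hx : x ∈ negF N a) : x % N = a % N := by
  rw [mem_negF hN] at hx
  exact ((mem_ray_iff hN a x).mp hx.1).2

include hN in
lemma card_negF (a : ℤ) : (negF N a).card = (-(a / N)).toNat := by
  rw [negF, Finset.card_image_of_injOn, Finset.card_range]
  intro k _ l _ h
  have hNpos : (0:ℤ) < N := by exact_mod_cast hN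
  simp only at h
  have : (k:ℤ) = l := by
    have := mul_left_cancel₀ (by positivity : (N:ℤ) ≠ 0) (by omega : (N:ℤ) * k = N * l)
    omega
  exact_mod_cast this

include hN in
lemma mem_posF (a x : ℤ) :
    x ∈ posF N a ↔ 0 ≤ x ∧ x % N = a % N ∧ x < a := by
  have hNpos : (0:ℤ) < N := by exact_mod_cast hN
  have h := Int.mul_ediv_add_emod a N
  have h1 := Int.emod_nonneg a (by positivity : (N:ℤ) ≠ 0)
  have h2 := Int.emod_lt_of_pos a hNpos
  simp only [posF, Finset.mem_image, Finset.mem_range]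
  constructor
  · rintro ⟨j, hj, rfl⟩
    have hj' : (j:ℤ) < a / N := by omega
    refine ⟨by positivity, ?_, by nlinarith⟩
    rw [Int.add_mul_emod_self_left, Int.emod_emod_of_dvd _ dvd_rfl]
  · rintro ⟨hx0, hmod, hlt⟩
    have hd := Int.mul_ediv_add_emod x N
    refine ⟨(x / N).toNat, ?_, ?_⟩
    · have hjn : 0 ≤ x / N := Int.ediv_nonneg hx0 (le_of_lt hNpos)
      have : x / N < a / N := by nlinarith [Int.mul_ediv_add_emod x N]
      omega
    · have hjn : 0 ≤ x / N := Int.ediv_nonneg hx0 (le_of_lt hNpos)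
      rw [Int.toNat_of_nonneg hjn]
      omega

include hN in
lemma posF_mod (a x : ℤ) (hx : x ∈ posF N a) : x % N = a % N :=
  ((mem_posF hN a x).mp hx).2.1

include hN in
lemma card_posF (a : ℤ) : (posF N a).card = ((a / N)).toNat := by
  rw [posF, Finset.card_image_of_injOn, Finset.card_range]
  intro k _ l _ h
  have hNpos : (0:ℤ) < N := by exact_mod_cast hN
  simp only at h
  have : (k:ℤ) = l := by
    have := mul_left_cancel₀ (by positivity : (N:ℤ) ≠ 0) (by omega : (N:ℤ) * k = N * l)
    omega
  exact_mod_cast this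

include hN in
lemma SA_diff_eq : SA N A \ {n : ℤ | 0 ≤ n} = ↑(A.biUnion (negF N)) := by
  ext x
  simp only [SA, Set.mem_diff, Set.mem_iUnion, Set.mem_setOf_eq, Finset.coe_biUnion,
    Finset.mem_coe, exists_prop]
  constructor
  · rintro ⟨⟨a, ha, hx⟩, hneg⟩
    exact ⟨a, ha, (mem_negF hN a x).mpr ⟨hx, by omega⟩⟩
  · rintro ⟨a, ha, hx⟩
    rw [mem_negF hN] at hx
    exact ⟨⟨a, ha, hx.1⟩, by omega⟩

include hN hres in
lemma diff_SA_eq (hcard : A.card = N) :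
    {n : ℤ | 0 ≤ n} \ SA N A = ↑(A.biUnion (posF N)) := by
  ext x
  simp only [SA, Set.mem_diff, Set.mem_iUnion, Set.mem_setOf_eq, Finset.coe_biUnion,
    Finset.mem_coe, exists_prop, not_exists, not_and]
  constructor
  · rintro ⟨hx0, hnot⟩
    -- find a ∈ A with matching residue
    have h1 := Int.emod_nonneg x (by positivity : (N:ℤ) ≠ 0)
    have hNpos : (0:ℤ) < N := by exact_mod_cast hN
    have h2 := Int.emod_lt_of_pos x hNpos
    have hmem : (x % (N:ℤ)).toNat ∈ Finset.range N := by simp only [Finset.mem_range]; omega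
    rw [← res_image hN hres hcard, Finset.mem_image] at hmem
    obtain ⟨a, ha, hra⟩ := hmem
    have h1' := Int.emod_nonneg a (by positivity : (N:ℤ) ≠ 0)
    have hmod : x % N = a % N := by omega
    have hxa : x < a := by
      by_contra hc
      push_neg at hc
      exact hnot a ha ((mem_ray_iff hN a x).mpr ⟨hc, hmod⟩)
    exact ⟨a, ha, (mem_posF hN a x).mpr ⟨hx0, hmod, hxa⟩⟩
  · rintro ⟨a, ha, hx⟩
    rw [mem_posF hN] at hx
    obtain ⟨hx0, hmod, hlt⟩ := hx
    refine ⟨hx0, fun b hb hxb => ?_⟩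
    rw [mem_ray_iff hN b x] at hxb
    have hba : b = a := res_inj hres b hb a ha (by omega)
    omega

include hN hres in
lemma ncard_SA_diff :
    (SA N A \ {n : ℤ | 0 ≤ n}).ncard = ∑ a ∈ A, (-(a / N)).toNat := by
  rw [SA_diff_eq hN, Set.ncard_coe_finset, Finset.card_biUnion, ]
  · exact Finset.sum_congr rfl fun a _ => card_negF hN a
  · intro a ha b hb hab
    rw [Function.onFun, Finset.disjoint_left]
    intro x hxa hxb
    have := negF_mod hN a x hxa
    have := negF_mod hN b x hxb
    exact hab (res_inj hres a ha b hb (by omega))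

include hN hres in
lemma ncard_diff_SA (hcard : A.card = N) :
    ({n : ℤ | 0 ≤ n} \ SA N A).ncard = ∑ a ∈ A, ((a / N)).toNat := by
  rw [diff_SA_eq hN hres hcard, Set.ncard_coe_finset, Finset.card_biUnion]
  · exact Finset.sum_congr rfl fun a _ => card_posF hN a
  · intro a ha b hb hab
    rw [Function.onFun, Finset.disjoint_left]
    intro x hxa hxb
    have := posF_mod hN a x hxa
    have := posF_mod hN b x hxb
    exact hab (res_inj hres a ha b hb (by omega))

lemma sums_iff (A : Finset ℤ) {N : ℕ} :
    (∑ a ∈ A, (-(a / N)).toNat = ∑ a ∈ A, ((a / N)).toNat) ↔ (∑ a ∈ A, a / (N:ℤ) = 0) := by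
  have key : ((∑ a ∈ A, ((a / N)).toNat : ℕ) : ℤ) - ((∑ a ∈ A, (-(a / N)).toNat : ℕ) : ℤ)
      = ∑ a ∈ A, a / N := by
    push_cast
    rw [← Finset.sum_sub_distrib]
    exact Finset.sum_congr rfl fun a _ => Int.toNat_sub_toNat_neg _
  constructor
  · intro h; rw [h] at key; omega
  · intro h
    rw [h] at key
    exact_mod_cast (by omega : ((∑ a ∈ A, (-(a / N)).toNat : ℕ) : ℤ) = ((∑ a ∈ A, ((a / N)).toNat : ℕ) : ℤ))

include hN hres in
lemma vcz_iff (hcard : A.card = N) :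
    VirtualCardZero (SA N A) ↔ (∑ a ∈ A, a / (N:ℤ) = 0) := by
  constructor
  · rintro ⟨_, _, hd⟩
    rw [ncard_SA_diff hN hres, ncard_diff_SA hN hres hcard] at hd
    exact (sums_iff A).mp hd
  · intro h
    refine ⟨?_, ?_, ?_⟩
    · rw [SA_diff_eq hN]; exact (A.biUnion (negF N)).finite_toSet
    · rw [diff_SA_eq hN hres hcard]; exact (A.biUnion (posF N)).finite_toSet
    · rw [ncard_SA_diff hN hres, ncard_diff_SA hN hres hcard]
      exact (sums_iff A).mpr h

end Main

section Struct

variable {N : ℕ} (hN : 0 < N) {A : Finset ℤ} {S : Set ℤ}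

lemma shift_SA_subset : shiftSet (SA N A) (N:ℤ) ⊆ SA N A := by
  rintro x ⟨s, hs, rfl⟩
  simp only [SA, Set.mem_iUnion, exists_prop] at hs ⊢
  obtain ⟨a, ha, k, rfl⟩ := hs
  exact ⟨a, ha, k + 1, by push_cast; ring⟩

lemma SA_union : (↑A : Set ℤ) ∪ shiftSet (SA N A) (N:ℤ) = SA N A := by
  apply Set.Subset.antisymm
  · rintro x (hx | hx)
    · simp only [SA, Set.mem_iUnion, exists_prop]
      exact ⟨x, hx, 0, by push_cast; ring⟩
    · exact shift_SA_subset hx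
  · rintro x hx
    simp only [SA, Set.mem_iUnion, exists_prop] at hx
    obtain ⟨a, ha, k, rfl⟩ := hx
    cases k with
    | zero => left; simpa using ha
    | succ k =>
      right
      refine ⟨a + (N:ℤ) * k, ?_, by push_cast; ring⟩
      simp only [SA, Set.mem_iUnion, exists_prop]
      exact ⟨a, ha, k, rfl⟩

include hN in
lemma SA_inter (hres : ∀ a ∈ A, ∀ b ∈ A, a ≠ b → ¬ (N : ℤ) ∣ (a - b)) :
    (↑A : Set ℤ) ∩ shiftSet (SA N A) (N:ℤ) = ∅ := by
  rw [Set.eq_empty_iff_forall_notMem]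
  rintro x ⟨hxA, s, hs, rfl⟩
  simp only [SA, Set.mem_iUnion, exists_prop] at hs
  obtain ⟨a, ha, k, rfl⟩ := hs
  have hNpos : (0:ℤ) < N := by exact_mod_cast hN
  have hne : a + (N:ℤ) * k + N ≠ a := by nlinarith [Int.natCast_nonneg k]
  exact hres _ hxA a ha hne ⟨k + 1, by push_cast; ring⟩

lemma closure (hsub : shiftSet S (N:ℤ) ⊆ S) :
    ∀ s ∈ S, ∀ k : ℕ, s + (N:ℤ) * k ∈ S := by
  intro s hs k
  induction k with
  | zero => simpa using hs
  | succ k ih =>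
    have : s + (N:ℤ) * (k + 1 : ℕ) = (s + (N:ℤ) * k) + N := by push_cast; ring
    rw [this]
    exact hsub ⟨_, ih, rfl⟩

include hN in
lemma forward_res (hK : IsKdV N S) (hL : IsLeadingTerm N S A) :
    ∀ a ∈ A, ∀ b ∈ A, a ≠ b → ¬ (N : ℤ) ∣ (a - b) := by
  rintro a ha b hb hne ⟨m, hm⟩
  have hNpos : (0:ℤ) < N := by exact_mod_cast hN
  obtain ⟨-, hU, hI⟩ := hL
  have hAS : (↑A : Set ℤ) ⊆ S := hU ▸ Set.subset_union_left
  have key : ∀ c ∈ A, ∀ d ∈ A, ∀ p : ℤ, 0 < p → c = d + (N:ℤ) * p → False := by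
    intro c hc d hd p hp hcd
    have h1 : d + (N:ℤ) * ((p - 1).toNat) ∈ S := closure hK.2 d (hAS hd) _
    have h2 : c ∈ shiftSet S (N:ℤ) := by
      refine ⟨d + (N:ℤ) * ((p - 1).toNat), h1, ?_⟩
      show d + (N:ℤ) * ((p - 1).toNat) + N = c
      have h3 : ((p - 1).toNat : ℤ) = p - 1 := by omega
      rw [h3, hcd]; ring
    have : c ∈ (↑A : Set ℤ) ∩ shiftSet S (N:ℤ) := ⟨hc, h2⟩
    rw [hI] at this
    exact this
  rcases lt_trichotomy m 0 with hm0 | hm0 | hm0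
  · refine key b hb a ha (-m) (by omega) ?_
    rw [mul_neg]; omega
  · rw [hm0, mul_zero] at hm; omega
  · exact key a ha b hb m hm0 (by omega)

include hN in
lemma forward_eq (hK : IsKdV N S) (hL : IsLeadingTerm N S A) : S = SA N A := by
  obtain ⟨-, hU, hI⟩ := hL
  have hAS : (↑A : Set ℤ) ⊆ S := hU ▸ Set.subset_union_left
  have hN1 : (1:ℤ) ≤ N := by exact_mod_cast hN
  apply Set.Subset.antisymm
  · obtain ⟨m₀, hm₀⟩ : ∃ m₀ : ℤ, ∀ s ∈ S, m₀ ≤ s := by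
      obtain ⟨m, hm⟩ := (hK.1.1.bddBelow)
      refine ⟨min m 0, fun s hs => ?_⟩
      by_cases h0 : 0 ≤ s
      · omega
      · have := hm ⟨hs, by simpa using h0⟩
        omega
    have main : ∀ n : ℕ, ∀ s ∈ S, (s - m₀).toNat ≤ n → s ∈ SA N A := by
      intro n
      induction n with
      | zero =>
        intro s hs hn
        rw [← hU] at hs
        rcases hs with hs | hs
        · simp only [SA, Set.mem_iUnion, exists_prop]
          exact ⟨s, hs, 0, by push_cast; ring⟩
        · obtain ⟨t, ht, hteq⟩ := hs
          have hteq' : t + (N:ℤ) = s := hteq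
          have := hm₀ t ht
          have := hm₀ s (hU ▸ Or.inr ⟨t, ht, hteq⟩)
          omega
      | succ n ih =>
        intro s hs hn
        rw [← hU] at hs
        rcases hs with hs | hs
        · simp only [SA, Set.mem_iUnion, exists_prop]
          exact ⟨s, hs, 0, by push_cast; ring⟩
        · obtain ⟨t, ht, hteq⟩ := hs
          have hteq' : t + (N:ℤ) = s := hteq
          have hmt := hm₀ t ht
          have htSA : t ∈ SA N A := ih t ht (by omega)
          simp only [SA, Set.mem_iUnion, exists_prop] at htSA ⊢
          obtain ⟨a, ha, k, hk⟩ := htSA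
          refine ⟨a, ha, k + 1, ?_⟩
          push_cast
          rw [mul_add, mul_one]
          omega
    intro s hs
    exact main _ s hs le_rfl
  · rintro x hx
    simp only [SA, Set.mem_iUnion, exists_prop] at hx
    obtain ⟨a, ha, k, rfl⟩ := hx
    exact closure hK.2 a (hAS ha) k

end Struct

end KdVAux

open KdVAux in
/-- Fix `N > 1`.  An `N`-element subset `A ⊆ ℤ` is the leading term
of a KdV subset if and only if `∑_{a ∈ A} a = N(N−1)/2` and `a − b` is not divisible
by `N` for all distinct `a, b ∈ A`. -/
theorem leadingTerm_characterization (N : ℕ) (hN : 1 < N)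
    (A : Finset ℤ) (hcard : A.card = N) :
    (∃ S : Set ℤ, IsKdV N S ∧ IsLeadingTerm N S A) ↔
      (∑ a ∈ A, a = (N : ℤ) * ((N : ℤ) - 1) / 2 ∧
        ∀ a ∈ A, ∀ b ∈ A, a ≠ b → ¬ (N : ℤ) ∣ (a - b)) := by
  have hN0 : 0 < N := by omega
  constructor
  · rintro ⟨S, hK, hL⟩
    have hres := forward_res hN0 hK hL
    refine ⟨?_, hres⟩
    have hSeq := forward_eq hN0 hK hL
    have hvcz : VirtualCardZero (SA N A) := hSeq ▸ hK.1
    rw [sum_iff hN0 hres hcard]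
    exact (vcz_iff hN0 hres hcard).mp hvcz
  · rintro ⟨hsum, hres⟩
    refine ⟨SA N A, ⟨?_, shift_SA_subset⟩, hcard, SA_union, SA_inter hN0 hres⟩
    exact (vcz_iff hN0 hres hcard).mpr ((sum_iff hN0 hres hcard).mp hsum)
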